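/- Let μ and ν be Borel probability measures on a closed set S ⊆ ℝ^d with finite k-th moments (k ≥ 1). Then the total variation distance plus the k-th power of the L^k-Wasserstein distance is bounded by a constant multiple of the weighted variation norm: ‖μ − ν‖_var + W_k(μ,ν)^k ≤ c ‖μ − ν‖_{k,var}, where ‖μ − ν‖_{k,var} := sup_{|f| ≤ 1 + |·|^k} |μ(f) − ν(f)| and c depends only on k. -/

import Mathlib

open MeasureTheory Set

lemma aux_rpow_add (k : ℝ) (hk : 1 ≤ k) {a b : ℝ} (ha : 0 ≤ a) (hb : 0 ≤ b) :
    (a + b) ^ k ≤ 2 ^ (k - 1) * (a ^ k + b ^ k) := by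
  have := NNReal.rpow_add_le_mul_rpow_add_rpow a.toNNReal b.toNNReal hk
  have h := NNReal.coe_le_coe.mpr this
  push_cast at h
  rw [Real.coe_toNNReal a ha, Real.coe_toNNReal b hb] at h
  convert h using 3

lemma aux_norm_sub (k : ℝ) (hk : 1 ≤ k) {E : Type*} [NormedAddCommGroup E] (x y : E) :
    ‖x - y‖ ^ k ≤ 2 ^ (k - 1) * (‖x‖ ^ k + ‖y‖ ^ k) :=
  le_trans (Real.rpow_le_rpow (norm_nonneg _) (norm_sub_le x y) (le_trans zero_le_one hk))
    (aux_rpow_add k hk (norm_nonneg _) (norm_nonneg _))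

lemma aux_decomp {α : Type*} [MeasurableSpace α] (μ ν : Measure α)
    [IsProbabilityMeasure μ] [IsProbabilityMeasure ν] :
    ∃ (lam a b : Measure α) (Es : Set α), MeasurableSet Es ∧
      lam + a = μ ∧ lam + b = ν ∧ a Esᶜ = 0 ∧ b Es = 0 ∧ a univ = b univ := by
  obtain ⟨s, hs, hs₁, hs₂⟩ := MeasureTheory.hahn_decomposition (μ := μ) (ν := ν)
  have hle₁ : ν.restrict s ≤ μ.restrict s := by
    refine Measure.le_iff.mpr fun t ht => ?_
    rw [Measure.restrict_apply ht, Measure.restrict_apply ht]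
    exact hs₁ _ (ht.inter hs) inter_subset_right
  have hle₂ : μ.restrict sᶜ ≤ ν.restrict sᶜ := by
    refine Measure.le_iff.mpr fun t ht => ?_
    rw [Measure.restrict_apply ht, Measure.restrict_apply ht]
    exact hs₂ _ (ht.inter hs.compl) inter_subset_right
  refine ⟨ν.restrict s + μ.restrict sᶜ, μ.restrict s - ν.restrict s,
    ν.restrict sᶜ - μ.restrict sᶜ, s, hs, ?_, ?_, ?_, ?_, ?_⟩
  · rw [add_comm (ν.restrict s) (μ.restrict sᶜ), add_assoc, add_comm (ν.restrict s),
      Measure.sub_add_cancel_of_le hle₁, add_comm, Measure.restrict_add_restrict_compl hs]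
  · rw [add_assoc, add_comm (μ.restrict sᶜ), Measure.sub_add_cancel_of_le hle₂,
      Measure.restrict_add_restrict_compl hs]
  · refine le_antisymm ?_ zero_le
    calc (μ.restrict s - ν.restrict s) sᶜ ≤ μ.restrict s sᶜ :=
          Measure.le_iff'.mp MeasureTheory.Measure.sub_le _
    _ = 0 := by rw [Measure.restrict_apply hs.compl]; simp
  · refine le_antisymm ?_ zero_le
    calc (ν.restrict sᶜ - μ.restrict sᶜ) s ≤ ν.restrict sᶜ s :=
          Measure.le_iff'.mp MeasureTheory.Measure.sub_le _
    _ = 0 := by rw [Measure.restrict_apply hs]; simp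
  · have h1 : (ν.restrict s + μ.restrict sᶜ) univ ≠ ⊤ := by
      have : (ν.restrict s + μ.restrict sᶜ) univ ≤ ν univ + μ univ := by
        rw [Measure.add_apply]
        exact add_le_add (le_trans (Measure.restrict_le_self _) le_rfl)
          (le_trans (Measure.restrict_le_self _) le_rfl)
      exact ne_top_of_le_ne_top (by simp) this
    have h2 : (ν.restrict s + μ.restrict sᶜ) univ + (μ.restrict s - ν.restrict s) univ
        = (ν.restrict s + μ.restrict sᶜ) univ + (ν.restrict sᶜ - μ.restrict sᶜ) univ := by
      rw [← Measure.add_apply, ← Measure.add_apply]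
      have e1 : ν.restrict s + μ.restrict sᶜ + (μ.restrict s - ν.restrict s) = μ := by
        rw [add_comm (ν.restrict s) (μ.restrict sᶜ), add_assoc, add_comm (ν.restrict s),
          Measure.sub_add_cancel_of_le hle₁, add_comm, Measure.restrict_add_restrict_compl hs]
      have e2 : ν.restrict s + μ.restrict sᶜ + (ν.restrict sᶜ - μ.restrict sᶜ) = ν := by
        rw [add_assoc, add_comm (μ.restrict sᶜ), Measure.sub_add_cancel_of_le hle₂,
          Measure.restrict_add_restrict_compl hs]
      rw [e1, e2]
      simp
    exact (ENNReal.add_right_inj h1).mp h2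

/-- Total variation distance `‖μ − ν‖_var = sup_{|f|≤1} |μ(f) − ν(f)|`. -/
noncomputable def totalVarDist {d : ℕ} (μ ν : Measure (EuclideanSpace ℝ (Fin d))) : ℝ :=
  sSup {r | ∃ f : EuclideanSpace ℝ (Fin d) → ℝ, Measurable f ∧ (∀ x, |f x| ≤ 1) ∧
    r = |(∫ x, f x ∂μ) - ∫ x, f x ∂ν|}

/-- Weighted variation norm `‖μ − ν‖_{k,var} = sup_{|f| ≤ 1 + |·|^k} |μ(f) − ν(f)|`. -/
noncomputable def weightedVarDist {d : ℕ} (k : ℝ)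
    (μ ν : Measure (EuclideanSpace ℝ (Fin d))) : ℝ :=
  sSup {r | ∃ f : EuclideanSpace ℝ (Fin d) → ℝ, Measurable f ∧ (∀ x, |f x| ≤ 1 + ‖x‖ ^ k) ∧
    r = |(∫ x, f x ∂μ) - ∫ x, f x ∂ν|}

/-- The `L^k`-Wasserstein distance `W_k(μ,ν) = (inf_{π ∈ C(μ,ν)} ∫ |x−y|^k dπ)^{1/k}`. -/
noncomputable def wassersteinK {d : ℕ} (k : ℝ)
    (μ ν : Measure (EuclideanSpace ℝ (Fin d))) : ℝ :=
  (sInf {r | ∃ π : Measure (EuclideanSpace ℝ (Fin d) × EuclideanSpace ℝ (Fin d)),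
      IsProbabilityMeasure π ∧ π.map Prod.fst = μ ∧ π.map Prod.snd = ν ∧
      r = ∫ p, ‖p.1 - p.2‖ ^ k ∂π}) ^ (1 / k)

theorem totalVar_add_wasserstein_le_weightedVar {d : ℕ} (k : ℝ) (hk : 1 ≤ k) :
    ∃ c > 0, ∀ S : Set (EuclideanSpace ℝ (Fin d)), IsClosed S →
      ∀ μ ν : Measure (EuclideanSpace ℝ (Fin d)),
        IsProbabilityMeasure μ → IsProbabilityMeasure ν →
        μ S = 1 → ν S = 1 →
        Integrable (fun x => ‖x‖ ^ k) μ → Integrable (fun x => ‖x‖ ^ k) ν →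
        totalVarDist μ ν + wassersteinK k μ ν ^ k ≤ c * weightedVarDist k μ ν := by
  have hk0 : (0:ℝ) < k := lt_of_lt_of_le one_pos hk
  refine ⟨1 + 2 ^ (k - 1), by positivity, fun S _ μ ν hμp hνp _ _ hμint hνint => ?_⟩
  obtain ⟨lam, a, b, Es, hEs, hlam_a, hlam_b, haEc, hbE, hab⟩ := aux_decomp μ ν
  classical
  set g : EuclideanSpace ℝ (Fin d) → ℝ := fun x => ‖x‖ ^ k with hg_def
  have hg_meas : Measurable g :=
    (Real.continuous_rpow_const hk0.le).measurable.comp measurable_norm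
  have hg_nonneg : ∀ x, 0 ≤ g x := fun x => Real.rpow_nonneg (norm_nonneg x) k
  have ha_le : a ≤ μ := by rw [← hlam_a]; exact Measure.le_add_left le_rfl
  have hb_le : b ≤ ν := by rw [← hlam_b]; exact Measure.le_add_left le_rfl
  have hlam_leμ : lam ≤ μ := by rw [← hlam_a]; exact Measure.le_add_right le_rfl
  have hlam_leν : lam ≤ ν := by rw [← hlam_b]; exact Measure.le_add_right le_rfl
  haveI hfa : IsFiniteMeasure a := isFiniteMeasure_of_le μ ha_le
  haveI hfb : IsFiniteMeasure b := isFiniteMeasure_of_le ν hb_le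
  haveI hflam : IsFiniteMeasure lam := isFiniteMeasure_of_le μ hlam_leμ
  -- integrabilities
  have h1g_μ : Integrable (fun x => 1 + g x) μ := (integrable_const 1).add hμint
  have h1g_ν : Integrable (fun x => 1 + g x) ν := (integrable_const 1).add hνint
  have h1g_a : Integrable (fun x => 1 + g x) a := h1g_μ.mono_measure ha_le
  have h1g_b : Integrable (fun x => 1 + g x) b := h1g_ν.mono_measure hb_le
  have hg_a : Integrable g a := hμint.mono_measure ha_le
  have hg_b : Integrable g b := hνint.mono_measure hb_le
  set A := ∫ x, (1 + g x) ∂a with hA_def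
  set B := ∫ x, (1 + g x) ∂b with hB_def
  have hA_nonneg : 0 ≤ A := integral_nonneg fun x => by positivity
  have hB_nonneg : 0 ≤ B := integral_nonneg fun x => by positivity
  have hgA : ∫ x, g x ∂a ≤ A :=
    integral_mono hg_a h1g_a fun x => le_add_of_nonneg_left zero_le_one
  have hgB : ∫ x, g x ∂b ≤ B :=
    integral_mono hg_b h1g_b fun x => le_add_of_nonneg_left zero_le_one
  have hD_nonneg : 0 ≤ A + B := add_nonneg hA_nonneg hB_nonneg
  -- splitting integrals along μ = lam + a, ν = lam + b
  have hsplit : ∀ (m₁ m₂ : Measure (EuclideanSpace ℝ (Fin d)))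
      (f : EuclideanSpace ℝ (Fin d) → ℝ), Integrable f (m₁ + m₂) →
      ∫ x, f x ∂(m₁ + m₂) = ∫ x, f x ∂m₁ + ∫ x, f x ∂m₂ := fun m₁ m₂ f hf =>
    integral_add_measure (hf.mono_measure (Measure.le_add_right le_rfl))
      (hf.mono_measure (Measure.le_add_left le_rfl))
  have habs : ∀ (m : Measure (EuclideanSpace ℝ (Fin d))) (f : EuclideanSpace ℝ (Fin d) → ℝ),
      |∫ x, f x ∂m| ≤ ∫ x, |f x| ∂m := fun m f => by
    simpa [Real.norm_eq_abs] using norm_integral_le_integral_norm (μ := m) f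
  -- total variation bound
  have hTV : totalVarDist μ ν ≤ A + B := by
    apply Real.sSup_le _ hD_nonneg
    rintro r ⟨f, hfm, hfb1, rfl⟩
    have hf_int : ∀ (m : Measure (EuclideanSpace ℝ (Fin d))) [IsFiniteMeasure m],
        Integrable f m := fun m _ =>
      Integrable.mono' (integrable_const 1) hfm.aestronglyMeasurable
        (Filter.Eventually.of_forall fun x => by simpa using hfb1 x)
    rw [← hlam_a, ← hlam_b, hsplit _ _ f (hlam_a ▸ hf_int μ), hsplit _ _ f (hlam_b ▸ hf_int ν)]
    have h1 : |(∫ x, f x ∂lam + ∫ x, f x ∂a) - (∫ x, f x ∂lam + ∫ x, f x ∂b)|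
        = |(∫ x, f x ∂a) - ∫ x, f x ∂b| := by ring_nf
    rw [h1]
    have h2 : |∫ x, f x ∂a| ≤ A := by
      refine le_trans ((habs _ _)) ?_
      refine integral_mono (hf_int a).abs h1g_a fun x => ?_
      exact le_trans (hfb1 x) (le_add_of_nonneg_right (hg_nonneg x))
    have h3 : |∫ x, f x ∂b| ≤ B := by
      refine le_trans ((habs _ _)) ?_
      refine integral_mono (hf_int b).abs h1g_b fun x => ?_
      exact le_trans (hfb1 x) (le_add_of_nonneg_right (hg_nonneg x))
    calc |(∫ x, f x ∂a) - ∫ x, f x ∂b| ≤ |∫ x, f x ∂a| + |∫ x, f x ∂b| := abs_sub _ _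
    _ ≤ A + B := add_le_add h2 h3
  -- weighted variation lower bound
  have hWVD : A + B ≤ weightedVarDist k μ ν := by
    set f₀ : EuclideanSpace ℝ (Fin d) → ℝ :=
      fun x => if x ∈ Es then 1 + g x else -(1 + g x) with hf₀_def
    have hf₀m : Measurable f₀ :=
      Measurable.ite hEs (measurable_const.add hg_meas) (measurable_const.add hg_meas).neg
    have hf₀b : ∀ x, |f₀ x| ≤ 1 + ‖x‖ ^ k := fun x => by
      have h0 : (0:ℝ) ≤ 1 + ‖x‖ ^ k := by positivity
      by_cases h : x ∈ Es
      · simp only [f₀, h, if_true]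
        rw [abs_of_nonneg h0]
      · simp only [f₀, h, if_false, abs_neg]
        rw [abs_of_nonneg h0]
    have hf₀_int : ∀ (m : Measure (EuclideanSpace ℝ (Fin d))),
        Integrable (fun x => 1 + g x) m → Integrable f₀ m := fun m hm =>
      Integrable.mono' hm hf₀m.aestronglyMeasurable
        (Filter.Eventually.of_forall fun x => by
          rw [Real.norm_eq_abs]; exact hf₀b x)
    have hbdd : BddAbove {r | ∃ f : EuclideanSpace ℝ (Fin d) → ℝ, Measurable f ∧
        (∀ x, |f x| ≤ 1 + ‖x‖ ^ k) ∧ r = |(∫ x, f x ∂μ) - ∫ x, f x ∂ν|} := by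
      refine ⟨(∫ x, (1 + g x) ∂μ) + ∫ x, (1 + g x) ∂ν, ?_⟩
      rintro r ⟨f, hfm, hfb1, rfl⟩
      have hfμ : Integrable f μ := Integrable.mono' h1g_μ hfm.aestronglyMeasurable
        (Filter.Eventually.of_forall fun x => by rw [Real.norm_eq_abs]; exact hfb1 x)
      have hfν : Integrable f ν := Integrable.mono' h1g_ν hfm.aestronglyMeasurable
        (Filter.Eventually.of_forall fun x => by rw [Real.norm_eq_abs]; exact hfb1 x)
      calc |(∫ x, f x ∂μ) - ∫ x, f x ∂ν| ≤ |∫ x, f x ∂μ| + |∫ x, f x ∂ν| := abs_sub _ _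
      _ ≤ (∫ x, (1 + g x) ∂μ) + ∫ x, (1 + g x) ∂ν := by
          refine add_le_add (le_trans (habs _ _) ?_)
            (le_trans (habs _ _) ?_)
          · exact integral_mono hfμ.abs h1g_μ fun x => hfb1 x
          · exact integral_mono hfν.abs h1g_ν fun x => hfb1 x
    have haes : ∀ᵐ x ∂a, x ∈ Es := by
      rw [ae_iff]
      exact haEc
    have hbes : ∀ᵐ x ∂b, x ∉ Es := by
      rw [ae_iff]
      simpa using hbE
    have hfa : ∫ x, f₀ x ∂a = A := by
      rw [hA_def]
      refine integral_congr_ae ?_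
      filter_upwards [haes] with x hx
      simp [f₀, hx]
    have hfbint : ∫ x, f₀ x ∂b = -B := by
      have : ∫ x, f₀ x ∂b = ∫ x, -(1 + g x) ∂b := by
        refine integral_congr_ae ?_
        filter_upwards [hbes] with x hx
        simp [f₀, hx]
      rw [this, integral_neg, hB_def]
    have hval : |(∫ x, f₀ x ∂μ) - ∫ x, f₀ x ∂ν| = A + B := by
      rw [← hlam_a, ← hlam_b,
        hsplit _ _ f₀ (hlam_a ▸ hf₀_int μ h1g_μ), hsplit _ _ f₀ (hlam_b ▸ hf₀_int ν h1g_ν),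
        hfa, hfbint]
      rw [show (∫ x, f₀ x ∂lam) + A - ((∫ x, f₀ x ∂lam) + -B) = A + B by ring]
      exact abs_of_nonneg hD_nonneg
    rw [weightedVarDist]
    exact hval ▸ le_csSup hbdd ⟨f₀, hf₀m, hf₀b, rfl⟩
  -- Wasserstein bound
  set F : EuclideanSpace ℝ (Fin d) × EuclideanSpace ℝ (Fin d) → ℝ :=
    fun p => ‖p.1 - p.2‖ ^ k with hF_def
  have hFc : Continuous F :=
    (Real.continuous_rpow_const hk0.le).comp ((continuous_fst.sub continuous_snd).norm)
  have hF_nonneg : ∀ p, 0 ≤ F p := fun p => Real.rpow_nonneg (norm_nonneg _) k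
  set WSet := {r | ∃ π : Measure (EuclideanSpace ℝ (Fin d) × EuclideanSpace ℝ (Fin d)),
      IsProbabilityMeasure π ∧ π.map Prod.fst = μ ∧ π.map Prod.snd = ν ∧
      r = ∫ p, F p ∂π} with hWSet_def
  set diag : EuclideanSpace ℝ (Fin d) → EuclideanSpace ℝ (Fin d) × EuclideanSpace ℝ (Fin d) :=
    fun x => (x, x) with hdiag_def
  have hdiag : Measurable diag := measurable_id.prodMk measurable_id
  have hdiag_univ : (lam.map diag) Set.univ = lam Set.univ := by
    rw [Measure.map_apply hdiag MeasurableSet.univ]; simp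
  have hdiag_fst : (lam.map diag).map Prod.fst = lam := by
    rw [Measure.map_map measurable_fst hdiag]
    exact Measure.map_id
  have hdiag_snd : (lam.map diag).map Prod.snd = lam := by
    rw [Measure.map_map measurable_snd hdiag]
    exact Measure.map_id
  have hFdiag_int : Integrable F (lam.map diag) := by
    rw [integrable_map_measure hFc.aestronglyMeasurable hdiag.aemeasurable]
    have : F ∘ diag = fun _ => (0:ℝ) := funext fun x => by
      simp [F, diag, Real.zero_rpow hk0.ne']
    rw [this]
    exact integrable_const 0
  have hFdiag_zero : ∫ p, F p ∂(lam.map diag) = 0 := by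
    rw [integral_map hdiag.aemeasurable hFc.aestronglyMeasurable]
    simp [F, diag, Real.zero_rpow hk0.ne']
  have hlamuniv : lam Set.univ + a Set.univ = 1 := by
    have := congrArg (fun m : Measure (EuclideanSpace ℝ (Fin d)) => m Set.univ) hlam_a
    simpa [Measure.add_apply] using this
  have hexists : ∃ r₀ ∈ WSet, r₀ ≤ 2 ^ (k - 1) * (A + B) := by
    by_cases ht : a Set.univ = 0
    · have ha0 : a = 0 := Measure.measure_univ_eq_zero.mp ht
      have hb0 : b = 0 := Measure.measure_univ_eq_zero.mp (hab ▸ ht)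
      have hlamμ : lam = μ := by rw [← hlam_a, ha0, add_zero]
      have hlamν : lam = ν := by rw [← hlam_b, hb0, add_zero]
      refine ⟨0, ⟨lam.map diag, ?_, ?_, ?_, hFdiag_zero.symm⟩, by positivity⟩
      · constructor
        rw [hdiag_univ, hlamμ]
        exact measure_univ
      · rw [hdiag_fst, hlamμ]
      · rw [hdiag_snd, hlamν]
    · -- main case: nontrivial residuals
      have ht_top : a Set.univ ≠ ⊤ := measure_ne_top a _
      have hb_top : b Set.univ ≠ ⊤ := measure_ne_top b _
      have hinv_top : (a Set.univ)⁻¹ ≠ ⊤ := ENNReal.inv_ne_top.mpr ht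
      set π : Measure (EuclideanSpace ℝ (Fin d) × EuclideanSpace ℝ (Fin d)) :=
        lam.map diag + (a Set.univ)⁻¹ • a.prod b with hπ_def
      have hπ_prob : IsProbabilityMeasure π := by
        constructor
        have h2 : (a.prod b) Set.univ = a Set.univ * a Set.univ := by
          rw [← univ_prod_univ, Measure.prod_prod, hab]
        rw [hπ_def, Measure.add_apply, Measure.smul_apply, h2, hdiag_univ, smul_eq_mul,
          ← mul_assoc, ENNReal.inv_mul_cancel ht ht_top, one_mul]
        exact hlamuniv
      have hπ_fst : π.map Prod.fst = μ := by
        rw [hπ_def, Measure.map_add _ _ measurable_fst, Measure.map_smul, hdiag_fst,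
          Measure.map_fst_prod, ← hab, smul_smul, ENNReal.inv_mul_cancel ht ht_top,
          one_smul, hlam_a]
      have hπ_snd : π.map Prod.snd = ν := by
        rw [hπ_def, Measure.map_add _ _ measurable_snd, Measure.map_smul, hdiag_snd,
          Measure.map_snd_prod, smul_smul, ENNReal.inv_mul_cancel ht ht_top,
          one_smul, hlam_b]
      -- integrability over the product
      have hIfst : Integrable (fun p => g p.1) (a.prod b) := by
        have h1 : Integrable g ((a.prod b).map Prod.fst) := by
          rw [Measure.map_fst_prod]
          exact hg_a.smul_measure hb_top
        exact (integrable_map_measure hg_meas.aestronglyMeasurable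
          measurable_fst.aemeasurable).mp h1
      have hIsnd : Integrable (fun p => g p.2) (a.prod b) := by
        have h1 : Integrable g ((a.prod b).map Prod.snd) := by
          rw [Measure.map_snd_prod]
          exact hg_b.smul_measure ht_top
        exact (integrable_map_measure hg_meas.aestronglyMeasurable
          measurable_snd.aemeasurable).mp h1
      have hG_int : Integrable (fun p => 2 ^ (k - 1) * (g p.1 + g p.2)) (a.prod b) :=
        (hIfst.add hIsnd).const_mul _
      have hF_le : ∀ p : EuclideanSpace ℝ (Fin d) × EuclideanSpace ℝ (Fin d),
          F p ≤ 2 ^ (k - 1) * (g p.1 + g p.2) := fun p => by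
        have := aux_norm_sub k hk p.1 p.2
        simpa [F, g, mul_add] using this
      have hF_prod : Integrable F (a.prod b) :=
        Integrable.mono' hG_int hFc.aestronglyMeasurable
          (Filter.Eventually.of_forall fun p => by
            rw [Real.norm_eq_abs, abs_of_nonneg (hF_nonneg p)]; exact hF_le p)
      -- integral computations over the product
      have hint_fst : ∫ p, g p.1 ∂(a.prod b) = (a Set.univ).toReal * ∫ x, g x ∂a := by
        have := integral_map (μ := a.prod b) measurable_fst.aemeasurable
          hg_meas.aestronglyMeasurable
        rw [Measure.map_fst_prod, integral_smul_measure, ← hab] at this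
        rw [← this]
        simp [smul_eq_mul]
      have hint_snd : ∫ p, g p.2 ∂(a.prod b) = (a Set.univ).toReal * ∫ x, g x ∂b := by
        have := integral_map (μ := a.prod b) measurable_snd.aemeasurable
          hg_meas.aestronglyMeasurable
        rw [Measure.map_snd_prod, integral_smul_measure] at this
        rw [← this]
        simp [smul_eq_mul]
      have hprod_bound : ∫ p, F p ∂(a.prod b)
          ≤ (a Set.univ).toReal * (2 ^ (k - 1) * ((∫ x, g x ∂a) + ∫ x, g x ∂b)) := by
        calc ∫ p, F p ∂(a.prod b) ≤ ∫ p, 2 ^ (k - 1) * (g p.1 + g p.2) ∂(a.prod b) :=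
              integral_mono_of_nonneg (Filter.Eventually.of_forall hF_nonneg) hG_int
                (Filter.Eventually.of_forall hF_le)
        _ = 2 ^ (k - 1) * ((∫ p, g p.1 ∂(a.prod b)) + ∫ p, g p.2 ∂(a.prod b)) := by
              rw [integral_const_mul, integral_add hIfst hIsnd]
        _ = (a Set.univ).toReal * (2 ^ (k - 1) * ((∫ x, g x ∂a) + ∫ x, g x ∂b)) := by
              rw [hint_fst, hint_snd]; ring
      set r₀ := ∫ p, F p ∂π with hr₀_def
      refine ⟨r₀, ⟨π, hπ_prob, hπ_fst, hπ_snd, rfl⟩, ?_⟩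
      have hr₀_eq : r₀ = ((a Set.univ)⁻¹).toReal * ∫ p, F p ∂(a.prod b) := by
        rw [hr₀_def, hπ_def, integral_add_measure hFdiag_int (hF_prod.smul_measure hinv_top),
          hFdiag_zero, integral_smul_measure, zero_add, smul_eq_mul]
      have htoReal_pos : 0 < (a Set.univ).toReal := ENNReal.toReal_pos ht ht_top
      have hinv_toReal : ((a Set.univ)⁻¹).toReal = ((a Set.univ).toReal)⁻¹ := by
        rw [ENNReal.toReal_inv]
      calc r₀ = ((a Set.univ).toReal)⁻¹ * ∫ p, F p ∂(a.prod b) := by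
            rw [hr₀_eq, hinv_toReal]
      _ ≤ ((a Set.univ).toReal)⁻¹ *
            ((a Set.univ).toReal * (2 ^ (k - 1) * ((∫ x, g x ∂a) + ∫ x, g x ∂b))) :=
            mul_le_mul_of_nonneg_left hprod_bound (by positivity)
      _ = 2 ^ (k - 1) * ((∫ x, g x ∂a) + ∫ x, g x ∂b) := by
            field_simp
      _ ≤ 2 ^ (k - 1) * (A + B) := by
            have h2 : (0:ℝ) ≤ 2 ^ (k - 1) := by positivity
            exact mul_le_mul_of_nonneg_left (add_le_add hgA hgB) h2
  obtain ⟨r₀, hr₀mem, hr₀le⟩ := hexists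
  have hWnonneg : ∀ r ∈ WSet, 0 ≤ r := by
    rintro r ⟨π, hπ, _, _, rfl⟩
    exact integral_nonneg fun p => hF_nonneg p
  have hSinf_le : sInf WSet ≤ r₀ := csInf_le ⟨0, fun r hr => hWnonneg r hr⟩ hr₀mem
  have hSinf_nonneg : 0 ≤ sInf WSet := le_csInf ⟨r₀, hr₀mem⟩ fun r hr => hWnonneg r hr
  have hWk : wassersteinK k μ ν ^ k = sInf WSet := by
    rw [wassersteinK, ← Real.rpow_mul hSinf_nonneg]
    rw [one_div_mul_cancel hk0.ne', Real.rpow_one]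
  have hW_bound : wassersteinK k μ ν ^ k ≤ 2 ^ (k - 1) * (A + B) := by
    rw [hWk]; exact le_trans hSinf_le hr₀le
  calc totalVarDist μ ν + wassersteinK k μ ν ^ k
      ≤ (A + B) + 2 ^ (k - 1) * (A + B) := add_le_add hTV hW_bound
  _ = (1 + 2 ^ (k - 1)) * (A + B) := by ring
  _ ≤ (1 + 2 ^ (k - 1)) * weightedVarDist k μ ν :=
      mul_le_mul_of_nonneg_left hWVD (by positivity)
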